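/- arXiv:2303.18224 — 2 statements merged into one kernel-verified Lean document; each statement's English description precedes it below -/
import Mathlib

section
/- Let {A^a}_{a∈A} be a finite family of d×d complex matrices, H a Hermitian d×d matrix, and f : S_{t₀} → ℂ; let Â^a_f denote the discrete operator Fourier transform. Then: (i) for every a ∈ A and every ω ∈ ℝ, (Â^a_f(ω))† equals the discrete operator Fourier transform of (A^a)† with weight f* (the pointwise complex conjugate of f) evaluated at −ω; (ii) ∑_{a∈A} ∑_{ω̄∈S_{ω₀}} Â^a_f(ω̄)† Â^a_f(ω̄) = ∑_{a∈A} ∑_{t̄∈S_{t₀}} |f(t̄)|² e^{iHt̄} (A^a)†A^a e^{−iHt̄}, and this matrix is ≼ ‖∑_{a∈A}(A^a)†A^a‖·(∑_{t̄∈S_{t₀}}|f(t̄)|²)·I in the Loewner order; (iii) likewise ∑_{a,ω̄} Â^a_f(ω̄) Â^a_f(ω̄)† = ∑_{a,t̄} |f(t̄)|² e^{iHt̄} A^a(A^a)† e^{−iHt̄} ≼ ‖∑_{a∈A}A^a(A^a)†‖·(∑_{t̄}|f(t̄)|²)·I. -/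
open scoped ComplexOrder Matrix

namespace Stmt10

/-- The space of `d × d` complex matrices. -/
abbrev Mat (d : ℕ) := Matrix (Fin d) (Fin d) ℂ

/-- Operator (spectral) norm of a complex matrix. -/
noncomputable def opNorm {m n : Type*} [Fintype m] [Fintype n] [DecidableEq n]
    (A : Matrix m n ℂ) : ℝ :=
  ‖LinearMap.toContinuousLinearMap (Matrix.toEuclideanLin A)‖

/-- The index grid `S = {-⌈(N-1)/2⌉, …, -1, 0, 1, …, ⌊(N-1)/2⌋}` for the discrete Fourier
transform on `N` points. -/
noncomputable def gridS (N : ℕ) : Finset ℤ := Finset.Icc (-((N : ℤ) / 2)) (((N : ℤ) - 1) / 2)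

/-- Heisenberg evolution `A(t) = e^{iHt} A e^{-iHt}`. -/
noncomputable def heis {d : ℕ} (H A : Mat d) (t : ℝ) : Mat d :=
  NormedSpace.exp ((Complex.I * (t : ℂ)) • H) * A *
    NormedSpace.exp ((-(Complex.I * (t : ℂ))) • H)

/-- The discrete operator Fourier transform
`Â_f(ω) = N^{-1/2} ∑_{t̄ ∈ S_{t₀}} e^{-iω t̄} f(t̄) e^{iH t̄} A e^{-iH t̄}`. -/
noncomputable def doft {d : ℕ} (N : ℕ) (t₀ : ℝ) (H : Mat d) (f : ℝ → ℂ) (A : Mat d) (ω : ℝ) :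
    Mat d :=
  (((Real.sqrt N)⁻¹ : ℝ) : ℂ) •
    ∑ k ∈ gridS N, (Complex.exp (-(Complex.I * (ω : ℂ) * ((t₀ * k : ℝ) : ℂ))) * f (t₀ * k)) •
      heis H A (t₀ * k)

variable {d : ℕ}
variable {d : ℕ}

lemma U_mul (H : Mat d) (a b : ℂ) :
    NormedSpace.exp (a • H) * NormedSpace.exp (b • H)
    = NormedSpace.exp ((a+b) • H) := by
  rw [← Matrix.exp_add_of_commute, add_smul]
  exact ((Commute.refl H).smul_left _).smul_right _

lemma U_mul_neg (H : Mat d) (a : ℂ) :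
    NormedSpace.exp (a • H) * NormedSpace.exp ((-a) • H) = 1 := by
  rw [U_mul]; simp [NormedSpace.exp_zero]

lemma U_conjT {H : Mat d} (hH : H.IsHermitian) (t : ℝ) :
    (NormedSpace.exp ((Complex.I * (t : ℂ)) • H))ᴴ
    = NormedSpace.exp ((-(Complex.I * (t : ℂ))) • H) := by
  rw [← Matrix.exp_conjTranspose, Matrix.conjTranspose_smul, hH.eq]
  congr 1
  simp [Complex.ext_iff]

lemma heis_mul (H A B : Mat d) (t : ℝ) : heis H A t * heis H B t = heis H (A*B) t := by
  unfold heis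
  have h := U_mul_neg H (-(Complex.I * (t:ℂ)))
  rw [neg_neg] at h
  have h2 : ∀ X : Mat d, NormedSpace.exp ((-(Complex.I * (t:ℂ))) • H) *
      (NormedSpace.exp ((Complex.I * (t:ℂ)) • H) * X) = X := by
    intro X; rw [← mul_assoc, h, one_mul]
  simp only [mul_assoc, h2]

lemma heis_conjT {H : Mat d} (hH : H.IsHermitian) (A : Mat d) (t : ℝ) :
    (heis H A t)ᴴ = heis H Aᴴ t := by
  unfold heis
  rw [Matrix.conjTranspose_mul, Matrix.conjTranspose_mul, ← U_conjT hH,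
    Matrix.conjTranspose_conjTranspose, U_conjT hH, mul_assoc]

lemma heis_one (H : Mat d) (t : ℝ) : heis H 1 t = 1 := by
  unfold heis; rw [mul_one, U_mul_neg]

lemma heis_smul (H A : Mat d) (c : ℂ) (t : ℝ) : heis H (c • A) t = c • heis H A t := by
  unfold heis; rw [Matrix.mul_smul, Matrix.smul_mul]

lemma heis_sum {ι : Type*} (s : Finset ι) (H : Mat d) (A : ι → Mat d) (t : ℝ) :
    heis H (∑ i ∈ s, A i) t = ∑ i ∈ s, heis H (A i) t := by
  unfold heis; rw [Finset.mul_sum, Finset.sum_mul]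

lemma heis_psd {H : Mat d} (hH : H.IsHermitian) {A : Mat d} (hA : A.PosSemidef) (t : ℝ) :
    (heis H A t).PosSemidef := by
  have : heis H A t = NormedSpace.exp ((Complex.I * (t:ℂ)) • H) * A *
      (NormedSpace.exp ((Complex.I * (t:ℂ)) • H))ᴴ := by
    rw [U_conjT hH]; rfl
  rw [this]
  exact hA.mul_mul_conjTranspose_same _
lemma gridS_card (N : ℕ) : (gridS N).card = N := by
  rw [gridS, Int.card_Icc]; omega

lemma gridS_eq_map (N : ℕ) :
    gridS N = (Finset.range N).map ⟨fun j : ℕ => -((N:ℤ)/2) + (j:ℤ), fun a b h => by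
      simpa using h⟩ := by
  ext x
  simp only [gridS, Finset.mem_Icc, Finset.mem_map, Finset.mem_range, Function.Embedding.coeFn_mk]
  constructor
  · intro hx
    exact ⟨(x + (N:ℤ)/2).toNat, by omega, show -((N:ℤ)/2) + ((x + (N:ℤ)/2).toNat : ℤ) = x by omega⟩
  · rintro ⟨j, hj, rfl⟩
    change -((N:ℤ)/2) ≤ -((N:ℤ)/2) + (j:ℤ) ∧ -((N:ℤ)/2) + (j:ℤ) ≤ ((N:ℤ) - 1) / 2
    omega

lemma sum_zpow_gridS (N : ℕ) (hN : 0 < N) (ζ : ℂ) (hζ0 : ζ ≠ 0) (hζ1 : ζ ≠ 1)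
    (hζN : ζ ^ (N : ℕ) = 1) : ∑ k ∈ gridS N, ζ ^ k = 0 := by
  rw [gridS_eq_map, Finset.sum_map]
  change ∑ j ∈ Finset.range N, ζ ^ (-((N:ℤ)/2) + (j:ℤ)) = 0
  have h : ∀ j : ℕ, ζ ^ (-((N:ℤ)/2) + (j:ℤ)) = ζ ^ (-((N:ℤ)/2)) * ζ ^ j := by
    intro j; rw [zpow_add₀ hζ0, zpow_natCast]
  simp only [h, ← Finset.mul_sum]
  rw [geom_sum_eq hζ1, hζN]
  simp

lemma fourier_sum (N : ℕ) (hN : 0 < N) (ω₀ t₀ : ℝ) (hωt : ω₀ * t₀ = 2 * Real.pi / N)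
    (m : ℤ) (hm : m.natAbs < N) :
    ∑ k ∈ gridS N, Complex.exp (Complex.I * ((ω₀ * t₀ : ℝ) : ℂ) * (m : ℂ) * (k : ℂ))
      = if m = 0 then (N : ℂ) else 0 := by
  have hNne : (N : ℂ) ≠ 0 := by exact_mod_cast hN.ne'
  by_cases h0 : m = 0
  · simp [h0, gridS_card]
  · rw [if_neg h0]
    set z : ℂ := Complex.I * ((ω₀ * t₀ : ℝ) : ℂ) * (m : ℂ) with hz
    have hexp : ∀ k : ℤ, Complex.exp (z * (k : ℂ)) = (Complex.exp z) ^ k := by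
      intro k; rw [mul_comm, Complex.exp_int_mul]
    have hzval : z = ((m : ℂ) / (N : ℂ)) * (2 * Real.pi * Complex.I) := by
      rw [hz, hωt]; push_cast; field_simp
    refine (Finset.sum_congr rfl fun k _ => hexp k).trans ?_
    refine sum_zpow_gridS N hN _ (Complex.exp_ne_zero z) ?_ ?_
    · intro h1
      rw [Complex.exp_eq_one_iff] at h1
      obtain ⟨n, hn⟩ := h1
      rw [hzval] at hn
      have h2πI : (2 * (Real.pi:ℂ) * Complex.I) ≠ 0 := by
        simp [Real.pi_ne_zero, Complex.I_ne_zero, Complex.ofReal_ne_zero]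
      have h2 : ((m : ℂ) / (N : ℂ)) = (n : ℂ) := mul_right_cancel₀ h2πI hn
      rw [div_eq_iff hNne] at h2
      have h3 : m = n * N := by exact_mod_cast h2
      have hn0 : n ≠ 0 := by rintro rfl; simp at h3; omega
      have h5 : m.natAbs = n.natAbs * N := by rw [h3, Int.natAbs_mul, Int.natAbs_natCast]
      have h6 : 1 ≤ n.natAbs := Int.natAbs_pos.mpr hn0
      nlinarith [hm, h5, h6]
    · rw [← Complex.exp_nat_mul, hzval]
      have h4 : (N : ℂ) * (((m : ℂ) / (N : ℂ)) * (2 * Real.pi * Complex.I))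
          = (m : ℂ) * (2 * Real.pi * Complex.I) := by field_simp
      rw [h4]
      exact Complex.exp_int_mul_two_pi_mul_I m
lemma gridS_sub_natAbs {N : ℕ} {s t : ℤ} (hs : s ∈ gridS N) (ht : t ∈ gridS N) :
    (s - t).natAbs < N := by
  simp only [gridS, Finset.mem_Icc] at hs ht
  omega

lemma master {d : ℕ} (N : ℕ) (hN : 0 < N) (ω₀ t₀ : ℝ) (hωt : ω₀ * t₀ = 2 * Real.pi / N)
    (F G : ℤ → ℂ) (P Q : ℤ → Mat d) :
    ∑ j ∈ gridS N,
      (∑ s ∈ gridS N, (Complex.exp (Complex.I * ((ω₀ * j : ℝ) : ℂ) * ((t₀ * s : ℝ) : ℂ)) * F s) • P s) *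
      (∑ t ∈ gridS N, (Complex.exp (-(Complex.I * ((ω₀ * j : ℝ) : ℂ) * ((t₀ * t : ℝ) : ℂ))) * G t) • Q t)
    = (N : ℂ) • ∑ t ∈ gridS N, (F t * G t) • (P t * Q t) := by
  have key : ∀ j s t : ℤ,
      (Complex.exp (Complex.I * ((ω₀ * j : ℝ) : ℂ) * ((t₀ * s : ℝ) : ℂ)) * F s) *
      (Complex.exp (-(Complex.I * ((ω₀ * j : ℝ) : ℂ) * ((t₀ * t : ℝ) : ℂ))) * G t)
      = Complex.exp (Complex.I * ((ω₀ * t₀ : ℝ) : ℂ) * ((s - t : ℤ) : ℂ) * (j : ℂ)) * (F s * G t) := by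
    intro j s t
    rw [mul_mul_mul_comm, ← Complex.exp_add]
    congr 2
    push_cast
    ring
  calc ∑ j ∈ gridS N,
      (∑ s ∈ gridS N, (Complex.exp (Complex.I * ((ω₀ * j : ℝ) : ℂ) * ((t₀ * s : ℝ) : ℂ)) * F s) • P s) *
      (∑ t ∈ gridS N, (Complex.exp (-(Complex.I * ((ω₀ * j : ℝ) : ℂ) * ((t₀ * t : ℝ) : ℂ))) * G t) • Q t)
      = ∑ s ∈ gridS N, ∑ t ∈ gridS N,
          (∑ j ∈ gridS N, Complex.exp (Complex.I * ((ω₀ * t₀ : ℝ) : ℂ) * ((s - t : ℤ) : ℂ) * (j : ℂ)))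
            • ((F s * G t) • (P s * Q t)) := by
        have step1 : ∀ j ∈ gridS N,
            (∑ s ∈ gridS N, (Complex.exp (Complex.I * ((ω₀ * j : ℝ) : ℂ) * ((t₀ * s : ℝ) : ℂ)) * F s) • P s) *
            (∑ t ∈ gridS N, (Complex.exp (-(Complex.I * ((ω₀ * j : ℝ) : ℂ) * ((t₀ * t : ℝ) : ℂ))) * G t) • Q t)
            = ∑ s ∈ gridS N, ∑ t ∈ gridS N,
                Complex.exp (Complex.I * ((ω₀ * t₀ : ℝ) : ℂ) * ((s - t : ℤ) : ℂ) * (j : ℂ))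
                  • ((F s * G t) • (P s * Q t)) := by
          intro j _
          rw [Finset.sum_mul_sum]
          refine Finset.sum_congr rfl fun s _ => Finset.sum_congr rfl fun t _ => ?_
          rw [smul_mul_smul_comm, key, mul_smul]
        rw [Finset.sum_congr rfl step1, Finset.sum_comm]
        refine Finset.sum_congr rfl fun s _ => ?_
        rw [Finset.sum_comm]
        refine Finset.sum_congr rfl fun t _ => ?_
        rw [Finset.sum_smul]
    _ = (N : ℂ) • ∑ t ∈ gridS N, (F t * G t) • (P t * Q t) := by
        rw [Finset.smul_sum]
        refine Finset.sum_congr rfl fun s hs => ?_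
        rw [Finset.sum_eq_single s]
        · rw [fourier_sum N hN ω₀ t₀ hωt _ (by simpa using gridS_sub_natAbs hs hs), if_pos (by ring)]
        · intro t ht hts
          rw [fourier_sum N hN ω₀ t₀ hωt _ (gridS_sub_natAbs hs ht), if_neg (by omega), zero_smul]
        · intro hs'; exact absurd hs hs'

lemma master' {d : ℕ} (N : ℕ) (hN : 0 < N) (ω₀ t₀ : ℝ) (hωt : ω₀ * t₀ = 2 * Real.pi / N)
    (F G : ℤ → ℂ) (P Q : ℤ → Mat d) :
    ∑ j ∈ gridS N,
      (∑ t ∈ gridS N, (Complex.exp (-(Complex.I * ((ω₀ * j : ℝ) : ℂ) * ((t₀ * t : ℝ) : ℂ))) * G t) • Q t) *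
      (∑ s ∈ gridS N, (Complex.exp (Complex.I * ((ω₀ * j : ℝ) : ℂ) * ((t₀ * s : ℝ) : ℂ)) * F s) • P s)
    = (N : ℂ) • ∑ t ∈ gridS N, (G t * F t) • (Q t * P t) := by
  have key : ∀ j s t : ℤ,
      (Complex.exp (-(Complex.I * ((ω₀ * j : ℝ) : ℂ) * ((t₀ * t : ℝ) : ℂ))) * G t) *
      (Complex.exp (Complex.I * ((ω₀ * j : ℝ) : ℂ) * ((t₀ * s : ℝ) : ℂ)) * F s)
      = Complex.exp (Complex.I * ((ω₀ * t₀ : ℝ) : ℂ) * ((s - t : ℤ) : ℂ) * (j : ℂ)) * (G t * F s) := by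
    intro j s t
    rw [mul_mul_mul_comm, ← Complex.exp_add]
    congr 2
    push_cast
    ring
  have step1 : ∀ j ∈ gridS N,
      (∑ t ∈ gridS N, (Complex.exp (-(Complex.I * ((ω₀ * j : ℝ) : ℂ) * ((t₀ * t : ℝ) : ℂ))) * G t) • Q t) *
      (∑ s ∈ gridS N, (Complex.exp (Complex.I * ((ω₀ * j : ℝ) : ℂ) * ((t₀ * s : ℝ) : ℂ)) * F s) • P s)
      = ∑ t ∈ gridS N, ∑ s ∈ gridS N,
          Complex.exp (Complex.I * ((ω₀ * t₀ : ℝ) : ℂ) * ((s - t : ℤ) : ℂ) * (j : ℂ))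
            • ((G t * F s) • (Q t * P s)) := by
    intro j _
    rw [Finset.sum_mul_sum]
    refine Finset.sum_congr rfl fun t _ => Finset.sum_congr rfl fun s _ => ?_
    rw [smul_mul_smul_comm, key, mul_smul]
  rw [Finset.sum_congr rfl step1, Finset.sum_comm, Finset.smul_sum]
  refine Finset.sum_congr rfl fun t ht => ?_
  rw [Finset.sum_comm, Finset.sum_congr rfl fun s (_ : s ∈ gridS N) => (Finset.sum_smul).symm]
  rw [Finset.sum_eq_single t]
  · rw [fourier_sum N hN ω₀ t₀ hωt _ (by simpa using gridS_sub_natAbs ht ht), if_pos (by ring)]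
  · intro s hs hst
    rw [fourier_sum N hN ω₀ t₀ hωt _ (gridS_sub_natAbs hs ht), if_neg (by omega), zero_smul]
  · intro ht'; exact absurd ht ht'
lemma star_mul_self_eq (z : ℂ) : star z * z = ((‖z‖^2 : ℝ) : ℂ) := by
  rw [Complex.star_def, mul_comm, Complex.mul_conj, Complex.sq_norm]

lemma mul_star_self_eq (z : ℂ) : z * star z = ((‖z‖^2 : ℝ) : ℂ) := by
  rw [Complex.star_def, Complex.mul_conj, Complex.sq_norm]

lemma psd_smul_real {d : ℕ} {M : Mat d} (hM : M.PosSemidef) {r : ℝ} (hr : 0 ≤ r) :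
    (r • M).PosSemidef := by
  rw [Matrix.posSemidef_iff_dotProduct_mulVec]
  constructor
  · unfold Matrix.IsHermitian
    rw [Matrix.conjTranspose_smul, star_trivial, hM.1.eq]
  · intro x
    rw [Matrix.smul_mulVec, dotProduct_smul]
    have h := hM.dotProduct_mulVec_nonneg x
    rw [Complex.real_smul]
    exact mul_nonneg (by exact_mod_cast hr) h

set_option maxHeartbeats 400000 in
set_option synthInstance.maxHeartbeats 400000 in
lemma key_bound {d : ℕ} {M : Mat d} (hM : M.PosSemidef) :
    (opNorm M • (1 : Mat d) - M).PosSemidef := by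
  rw [Matrix.posSemidef_iff_dotProduct_mulVec]
  constructor
  · have h1 : (opNorm M • (1 : Mat d)).IsHermitian := by
      unfold Matrix.IsHermitian
      rw [Matrix.conjTranspose_smul, star_trivial, Matrix.conjTranspose_one]
    exact h1.sub hM.1
  · intro x
    set y : EuclideanSpace ℂ (Fin d) := (WithLp.equiv 2 _).symm x with hy
    have h_self : dotProduct (star x) x = ((‖y‖^2 : ℝ) : ℂ) := by
      have h := EuclideanSpace.inner_eq_star_dotProduct y y
      rw [inner_self_eq_norm_sq_to_K] at h
      rw [dotProduct_comm]
      push_cast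
      exact h.symm
    have h_quad : dotProduct (star x) (M *ᵥ x) = inner ℂ y (Matrix.toEuclideanLin M y) := by
      rw [EuclideanSpace.inner_eq_star_dotProduct, dotProduct_comm]; rfl
    set z : ℂ := dotProduct (star x) (M *ᵥ x) with hzdef
    have hz : 0 ≤ z := hM.dotProduct_mulVec_nonneg x
    have hz_im : z.im = 0 := by
      rw [Complex.le_def] at hz; simpa using hz.2.symm
    have hz_re : z.re ≤ opNorm M * ‖y‖^2 := by
      have h1 : z.re ≤ ‖z‖ := Complex.re_le_norm z
      have h2 : ‖z‖ ≤ ‖y‖ * ‖Matrix.toEuclideanLin M y‖ := by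
        rw [h_quad]
        exact norm_inner_le_norm y _
      have h3 : ‖Matrix.toEuclideanLin M y‖ ≤ opNorm M * ‖y‖ := by
        have := (LinearMap.toContinuousLinearMap (Matrix.toEuclideanLin M)).le_opNorm y
        simpa [opNorm] using this
      nlinarith [norm_nonneg y]
    rw [Matrix.sub_mulVec, Matrix.smul_mulVec, Matrix.one_mulVec,
      dotProduct_sub, dotProduct_smul, h_self, ← hzdef]
    have hsm : opNorm M • ((‖y‖^2 : ℝ) : ℂ) = ((opNorm M * ‖y‖^2 : ℝ) : ℂ) := by
      rw [Complex.real_smul, ← Complex.ofReal_mul]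
    rw [hsm, Complex.le_def]
    constructor
    · simp only [Complex.zero_re, Complex.sub_re, Complex.ofReal_re]
      linarith
    · simp only [Complex.zero_im, Complex.sub_im, Complex.ofReal_im, hz_im, sub_zero]

lemma ofReal_smul_eq {d : ℕ} (r : ℝ) (M : Mat d) : ((r : ℝ) : ℂ) • M = r • M := by
  ext i j
  simp [Complex.real_smul]

lemma psd_sum {d : ℕ} {ι : Type*} (s : Finset ι) (F : ι → Mat d)
    (h : ∀ i ∈ s, (F i).PosSemidef) : (∑ i ∈ s, F i).PosSemidef :=
  Finset.sum_induction F _ (fun _ _ ha hb => ha.add hb) Matrix.PosSemidef.zero h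

lemma heis_sub {d : ℕ} (H A B : Mat d) (t : ℝ) :
    heis H (A - B) t = heis H A t - heis H B t := by
  unfold heis; rw [Matrix.mul_sub, Matrix.sub_mul]

lemma heis_smul_real {d : ℕ} (H A : Mat d) (r : ℝ) (t : ℝ) :
    heis H (r • A) t = r • heis H A t := by
  rw [← ofReal_smul_eq, heis_smul, ofReal_smul_eq]

lemma heis_bound {d : ℕ} {H : Mat d} (hH : H.IsHermitian) {M : Mat d} (hM : M.PosSemidef)
    (t : ℝ) : (opNorm M • (1 : Mat d) - heis H M t).PosSemidef := by
  have h1 : opNorm M • (1 : Mat d) - heis H M t = heis H (opNorm M • (1 : Mat d) - M) t := by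
    rw [heis_sub, heis_smul_real, heis_one]
  rw [h1]
  exact heis_psd hH (key_bound hM) t

lemma loewner_aux {d : ℕ} (N : ℕ) (t₀ : ℝ) {H : Mat d} (hH : H.IsHermitian) {M : Mat d}
    (hM : M.PosSemidef) (r : ℤ → ℝ) (hr : ∀ k, 0 ≤ r k) :
    ((opNorm M * ∑ k ∈ gridS N, r k) • (1 : Mat d) -
      ∑ k ∈ gridS N, ((r k : ℝ) : ℂ) • heis H M (t₀ * k)).PosSemidef := by
  have h2 : (opNorm M * ∑ k ∈ gridS N, r k) • (1 : Mat d)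
      = ∑ k ∈ gridS N, r k • (opNorm M • (1 : Mat d)) := by
    simp_rw [smul_smul]
    rw [← Finset.sum_smul, ← Finset.sum_mul]
    ring_nf
  have h3 : ∀ k ∈ gridS N, ((r k : ℝ) : ℂ) • heis H M (t₀ * k) = r k • heis H M (t₀ * k) :=
    fun k _ => ofReal_smul_eq _ _
  rw [h2, Finset.sum_congr rfl h3, ← Finset.sum_sub_distrib]
  refine psd_sum _ _ fun k _ => ?_
  rw [← smul_sub]
  exact psd_smul_real (heis_bound hH hM _) (hr k)

lemma doft_conjT {d : ℕ} (N : ℕ) (t₀ : ℝ) {H : Mat d} (hH : H.IsHermitian) (f : ℝ → ℂ)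
    (A : Mat d) (ω : ℝ) :
    (doft N t₀ H f A ω)ᴴ = (((Real.sqrt N)⁻¹ : ℝ) : ℂ) •
      ∑ s ∈ gridS N, (Complex.exp (Complex.I * (ω : ℂ) * ((t₀ * s : ℝ) : ℂ)) * star (f (t₀ * s)))
        • heis H Aᴴ (t₀ * s) := by
  unfold doft
  rw [Matrix.conjTranspose_smul, Matrix.conjTranspose_sum]
  congr 1
  · simp [Complex.star_def, Complex.conj_ofReal]
  refine Finset.sum_congr rfl fun s _ => ?_
  rw [Matrix.conjTranspose_smul, heis_conjT hH]
  congr 1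
  rw [star_mul']
  congr 1
  rw [Complex.star_def, ← Complex.exp_conj]
  congr 1
  simp [Complex.conj_ofReal]

lemma sqrt_scal (N : ℕ) (hN : 0 < N) :
    (((Real.sqrt N)⁻¹ : ℝ) : ℂ) * (((Real.sqrt N)⁻¹ : ℝ) : ℂ) * (N : ℂ) = 1 := by
  have h : ((Real.sqrt N)⁻¹ : ℝ) * ((Real.sqrt N)⁻¹ : ℝ) * (N : ℝ) = 1 := by
    rw [← mul_inv]
    rw [Real.mul_self_sqrt (by positivity)]
    field_simp
  calc (((Real.sqrt N)⁻¹ : ℝ) : ℂ) * (((Real.sqrt N)⁻¹ : ℝ) : ℂ) * (N : ℂ)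
      = ((((Real.sqrt N)⁻¹ : ℝ) * ((Real.sqrt N)⁻¹ : ℝ) * (N : ℝ) : ℝ) : ℂ) := by push_cast; ring
    _ = 1 := by rw [h]; norm_num

lemma parseval_left {d : ℕ} (N : ℕ) (hN : 0 < N) (ω₀ t₀ : ℝ)
    (hωt : ω₀ * t₀ = 2 * Real.pi / N) {H : Mat d} (hH : H.IsHermitian) (f : ℝ → ℂ) (A : Mat d) :
    ∑ j ∈ gridS N, (doft N t₀ H f A (ω₀ * j))ᴴ * doft N t₀ H f A (ω₀ * j)
      = ∑ k ∈ gridS N, ((‖f (t₀ * k)‖ ^ 2 : ℝ) : ℂ) • heis H (Aᴴ * A) (t₀ * k) := by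
  set c : ℂ := (((Real.sqrt N)⁻¹ : ℝ) : ℂ) with hc
  have step : ∀ j ∈ gridS N, (doft N t₀ H f A (ω₀ * j))ᴴ * doft N t₀ H f A (ω₀ * j)
      = (c * c) •
        ((∑ s ∈ gridS N, (Complex.exp (Complex.I * ((ω₀ * (j:ℤ) : ℝ) : ℂ) * ((t₀ * s : ℝ) : ℂ))
            * star (f (t₀ * s))) • heis H Aᴴ (t₀ * s)) *
         (∑ t ∈ gridS N, (Complex.exp (-(Complex.I * ((ω₀ * (j:ℤ) : ℝ) : ℂ) * ((t₀ * t : ℝ) : ℂ)))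
            * f (t₀ * t)) • heis H A (t₀ * t))) := by
    intro j _
    rw [doft_conjT N t₀ hH f A (ω₀ * j)]
    unfold doft
    rw [smul_mul_smul_comm]
  rw [Finset.sum_congr rfl step, ← Finset.smul_sum,
    master N hN ω₀ t₀ hωt (fun s => star (f (t₀ * s))) (fun t => f (t₀ * t))
      (fun s => heis H Aᴴ (t₀ * s)) (fun t => heis H A (t₀ * t)),
    smul_smul, sqrt_scal N hN, one_smul]
  refine Finset.sum_congr rfl fun t _ => ?_
  rw [star_mul_self_eq, heis_mul]

lemma parseval_right {d : ℕ} (N : ℕ) (hN : 0 < N) (ω₀ t₀ : ℝ)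
    (hωt : ω₀ * t₀ = 2 * Real.pi / N) {H : Mat d} (hH : H.IsHermitian) (f : ℝ → ℂ) (A : Mat d) :
    ∑ j ∈ gridS N, doft N t₀ H f A (ω₀ * j) * (doft N t₀ H f A (ω₀ * j))ᴴ
      = ∑ k ∈ gridS N, ((‖f (t₀ * k)‖ ^ 2 : ℝ) : ℂ) • heis H (A * Aᴴ) (t₀ * k) := by
  set c : ℂ := (((Real.sqrt N)⁻¹ : ℝ) : ℂ) with hc
  have step : ∀ j ∈ gridS N, doft N t₀ H f A (ω₀ * j) * (doft N t₀ H f A (ω₀ * j))ᴴ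
      = (c * c) •
        ((∑ t ∈ gridS N, (Complex.exp (-(Complex.I * ((ω₀ * (j:ℤ) : ℝ) : ℂ) * ((t₀ * t : ℝ) : ℂ)))
            * f (t₀ * t)) • heis H A (t₀ * t)) *
         (∑ s ∈ gridS N, (Complex.exp (Complex.I * ((ω₀ * (j:ℤ) : ℝ) : ℂ) * ((t₀ * s : ℝ) : ℂ))
            * star (f (t₀ * s))) • heis H Aᴴ (t₀ * s))) := by
    intro j _
    rw [doft_conjT N t₀ hH f A (ω₀ * j)]
    unfold doft
    rw [smul_mul_smul_comm]
  rw [Finset.sum_congr rfl step, ← Finset.smul_sum,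
    master' N hN ω₀ t₀ hωt (fun s => star (f (t₀ * s))) (fun t => f (t₀ * t))
      (fun s => heis H Aᴴ (t₀ * s)) (fun t => heis H A (t₀ * t)),
    smul_smul, sqrt_scal N hN, one_smul]
  refine Finset.sum_congr rfl fun t _ => ?_
  rw [mul_star_self_eq, heis_mul]


/-- Symmetry and operator Parseval's identity for the discrete operator
Fourier transform. -/
theorem stmt10 (d : ℕ) (hd : 1 ≤ d) (N : ℕ) (hN : 0 < N) (ω₀ t₀ : ℝ) (hω₀ : 0 < ω₀)
    (ht₀ : 0 < t₀) (hωt : ω₀ * t₀ = 2 * Real.pi / N)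
    (H : Mat d) (hH : H.IsHermitian)
    (ι : Type) [Fintype ι] (A : ι → Mat d) (f : ℝ → ℂ) :
    -- (i) symmetry: `(Â^a_f(ω))† = (A^a†)^_{f*}(-ω)`
    (∀ (a : ι) (ω : ℝ),
      (doft N t₀ H f (A a) ω)ᴴ = doft N t₀ H (fun t => star (f t)) ((A a)ᴴ) (-ω)) ∧
    -- (ii) operator Parseval's identity
    (∑ a : ι, ∑ k ∈ gridS N, (doft N t₀ H f (A a) (ω₀ * k))ᴴ * doft N t₀ H f (A a) (ω₀ * k) =
      ∑ a : ι, ∑ k ∈ gridS N, ((‖f (t₀ * k)‖ ^ 2 : ℝ) : ℂ) • heis H ((A a)ᴴ * A a) (t₀ * k)) ∧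
    -- (ii) Loewner bound
    (((opNorm (∑ a : ι, (A a)ᴴ * A a) * ∑ k ∈ gridS N, ‖f (t₀ * k)‖ ^ 2 : ℝ) • (1 : Mat d) -
        ∑ a : ι, ∑ k ∈ gridS N,
          (doft N t₀ H f (A a) (ω₀ * k))ᴴ * doft N t₀ H f (A a) (ω₀ * k)).PosSemidef) ∧
    -- (iii) operator Parseval's identity for the reversed order
    (∑ a : ι, ∑ k ∈ gridS N, doft N t₀ H f (A a) (ω₀ * k) * (doft N t₀ H f (A a) (ω₀ * k))ᴴ =
      ∑ a : ι, ∑ k ∈ gridS N, ((‖f (t₀ * k)‖ ^ 2 : ℝ) : ℂ) • heis H (A a * (A a)ᴴ) (t₀ * k)) ∧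
    -- (iii) Loewner bound
    (((opNorm (∑ a : ι, A a * (A a)ᴴ) * ∑ k ∈ gridS N, ‖f (t₀ * k)‖ ^ 2 : ℝ) • (1 : Mat d) -
        ∑ a : ι, ∑ k ∈ gridS N,
          doft N t₀ H f (A a) (ω₀ * k) * (doft N t₀ H f (A a) (ω₀ * k))ᴴ).PosSemidef) := by
  have hi : ∀ (a : ι) (ω : ℝ),
      (doft N t₀ H f (A a) ω)ᴴ = doft N t₀ H (fun t => star (f t)) ((A a)ᴴ) (-ω) := by
    intro a ω
    rw [doft_conjT N t₀ hH f (A a) ω]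
    unfold doft
    congr 1
    refine Finset.sum_congr rfl fun s _ => ?_
    congr 2
    push_cast
    ring_nf
  have hii : ∑ a : ι, ∑ k ∈ gridS N,
        (doft N t₀ H f (A a) (ω₀ * k))ᴴ * doft N t₀ H f (A a) (ω₀ * k)
      = ∑ a : ι, ∑ k ∈ gridS N, ((‖f (t₀ * k)‖ ^ 2 : ℝ) : ℂ) • heis H ((A a)ᴴ * A a) (t₀ * k) :=
    Finset.sum_congr rfl fun a _ => parseval_left N hN ω₀ t₀ hωt hH f (A a)
  have hiii : ∑ a : ι, ∑ k ∈ gridS N,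
        doft N t₀ H f (A a) (ω₀ * k) * (doft N t₀ H f (A a) (ω₀ * k))ᴴ
      = ∑ a : ι, ∑ k ∈ gridS N, ((‖f (t₀ * k)‖ ^ 2 : ℝ) : ℂ) • heis H (A a * (A a)ᴴ) (t₀ * k) :=
    Finset.sum_congr rfl fun a _ => parseval_right N hN ω₀ t₀ hωt hH f (A a)
  have hswap : ∀ (X : ι → Mat d),
      ∑ a : ι, ∑ k ∈ gridS N, ((‖f (t₀ * k)‖ ^ 2 : ℝ) : ℂ) • heis H (X a) (t₀ * k)
      = ∑ k ∈ gridS N, ((‖f (t₀ * k)‖ ^ 2 : ℝ) : ℂ) • heis H (∑ a : ι, X a) (t₀ * k) := by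
    intro X
    rw [Finset.sum_comm]
    exact Finset.sum_congr rfl fun k _ => by rw [← Finset.smul_sum, ← heis_sum]
  refine ⟨hi, hii, ?_, hiii, ?_⟩
  · rw [hii, hswap]
    exact loewner_aux N t₀ hH
      (psd_sum _ _ fun a _ => Matrix.posSemidef_conjTranspose_mul_self (A a))
      (fun k => ‖f (t₀ * k)‖ ^ 2) (fun k => sq_nonneg _)
  · rw [hiii, hswap]
    exact loewner_aux N t₀ hH
      (psd_sum _ _ fun a _ => Matrix.posSemidef_self_mul_conjTranspose (A a))
      (fun k => ‖f (t₀ * k)‖ ^ 2) (fun k => sq_nonneg _)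

end Stmt10
end

section
/- Let N be a positive integer, ω₀, t₀ > 0 with ω₀t₀ = 2π/N, and let K be a positive integer with 2K ≤ N; set T := K·t₀ and define the uniform weight f : S_{t₀} → ℂ by f(t̄) := (2T/t₀)^{−1/2}·𝟙(−T ≤ t̄ < T). Let f̂(ω̄) := N^{−1/2} ∑_{t̄∈S_{t₀}} e^{−iω̄t̄} f(t̄) denote its discrete Fourier transform. Then: (i) for every ω̄ ∈ S_{ω₀} with e^{iω̄t₀} ≠ 1, f̂(ω̄) = (2TN/t₀)^{−1/2}·(e^{−iω̄T} − e^{iω̄T})/(e^{−iω̄t₀} − 1); and (ii) for every positive integer m, ∑_{ω̄∈S_{ω₀}, |ω̄| > mω₀} |f̂(ω̄)|² ≤ π/(2mω₀T). -/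
namespace Stmt12

/-- The index grid `S = {-⌈(N-1)/2⌉, …, -1, 0, 1, …, ⌊(N-1)/2⌋}` for the discrete Fourier
transform on `N` points. -/
noncomputable def gridS (N : ℕ) : Finset ℤ := Finset.Icc (-((N : ℤ) / 2)) (((N : ℤ) - 1) / 2)

open Finset in
lemma geom_Icc (z : ℂ) (hz0 : z ≠ 0) (hz1 : z ≠ 1) (K : ℕ) :
    ∑ k ∈ Finset.Icc (-(K:ℤ)) ((K:ℤ)-1), z ^ k = (z ^ (K:ℤ) - z ^ (-(K:ℤ))) / (z - 1) := by
  have hset : Finset.Icc (-(K:ℤ)) ((K:ℤ)-1)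
      = (Finset.range (2*K)).map ⟨fun j : ℕ => (j:ℤ) - K, by intro a b h; simp only at h; omega⟩ := by
    ext x
    simp only [Finset.mem_Icc, Finset.mem_map, Finset.mem_range, Function.Embedding.coeFn_mk]
    constructor
    · intro h; exact ⟨(x + K).toNat, by omega, by show ((x + K).toNat : ℤ) - K = x; omega⟩
    · rintro ⟨j, hj, rfl⟩; show -(K:ℤ) ≤ (j:ℤ) - K ∧ (j:ℤ) - K ≤ K - 1; omega
  rw [hset, Finset.sum_map]
  show ∑ j ∈ Finset.range (2*K), z ^ ((j:ℤ) - (K:ℤ)) = _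
  have hterm : ∀ j : ℕ, z ^ ((j:ℤ) - (K:ℤ)) = z ^ j / z ^ K := by
    intro j
    rw [zpow_sub₀ hz0, zpow_natCast, zpow_natCast]
  simp only [hterm]
  rw [← Finset.sum_div, geom_sum_eq hz1]
  have hw : z ^ K ≠ 0 := pow_ne_zero _ hz0
  have h2 : z ^ (2*K) = z ^ K * z ^ K := by rw [two_mul, pow_add]
  rw [h2, zpow_natCast, zpow_neg, zpow_natCast]
  field_simp

lemma norm_exp_mul_I_sub_one (θ : ℝ) :
    ‖Complex.exp ((θ:ℂ) * Complex.I) - 1‖ = 2 * |Real.sin (θ/2)| := by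
  rw [Complex.norm_def, Complex.normSq_apply]
  have h1 : (Complex.exp ((θ:ℂ) * Complex.I) - 1).re = Real.cos θ - 1 := by
    simp [Complex.exp_ofReal_mul_I_re]
  have h2 : (Complex.exp ((θ:ℂ) * Complex.I) - 1).im = Real.sin θ := by
    simp [Complex.exp_ofReal_mul_I_im]
  rw [h1, h2]
  have hc : Real.cos θ = Real.cos (θ/2) ^ 2 - Real.sin (θ/2) ^ 2 := by
    rw [← Real.cos_two_mul']; ring_nf
  have hs : Real.sin θ = 2 * Real.sin (θ/2) * Real.cos (θ/2) := by
    rw [← Real.sin_two_mul]; ring_nf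
  have hkey : (Real.cos θ - 1) * (Real.cos θ - 1) + Real.sin θ * Real.sin θ
      = (2 * |Real.sin (θ/2)|)^2 := by
    have hpy := Real.sin_sq_add_cos_sq (θ/2)
    rw [hc, hs, mul_pow, sq_abs]
    nlinarith [hpy]
  rw [hkey, Real.sqrt_sq (by positivity)]

/-- Closed form and tail bound for the discrete Fourier transform of the
uniform weight `f(t̄) = (2T/t₀)^{-1/2}·𝟙(-T ≤ t̄ < T)` with `T = K·t₀`, `2K ≤ N`. -/
theorem stmt12 (N : ℕ) (hN : 0 < N) (ω₀ t₀ : ℝ) (hω₀ : 0 < ω₀) (ht₀ : 0 < t₀)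
    (hωt : ω₀ * t₀ = 2 * Real.pi / N) (K : ℕ) (hK : 0 < K) (h2K : 2 * K ≤ N) :
    -- `T = K·t₀`, the uniform weight `f`, and its discrete Fourier transform `f̂`
    ∀ T : ℝ, T = K * t₀ →
    ∀ f : ℝ → ℂ,
      (∀ t : ℝ, f t = if -T ≤ t ∧ t < T then ((((Real.sqrt (2 * T / t₀))⁻¹ : ℝ)) : ℂ) else 0) →
    ∀ fhat : ℝ → ℂ,
      (∀ ω : ℝ, fhat ω = (((Real.sqrt N)⁻¹ : ℝ) : ℂ) *
        ∑ k ∈ gridS N, Complex.exp (-(Complex.I * (ω : ℂ) * ((t₀ * k : ℝ) : ℂ))) * f (t₀ * k)) →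
    -- (i) the closed form of `f̂` on the frequency grid
    (∀ k ∈ gridS N,
      Complex.exp (Complex.I * ((ω₀ * k : ℝ) : ℂ) * (t₀ : ℂ)) ≠ 1 →
      fhat (ω₀ * k) = (((Real.sqrt (2 * T * N / t₀))⁻¹ : ℝ) : ℂ) *
        (Complex.exp (-(Complex.I * ((ω₀ * k : ℝ) : ℂ) * (T : ℂ))) -
          Complex.exp (Complex.I * ((ω₀ * k : ℝ) : ℂ) * (T : ℂ))) /
        (Complex.exp (-(Complex.I * ((ω₀ * k : ℝ) : ℂ) * (t₀ : ℂ))) - 1)) ∧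
    -- (ii) the tail bound
    (∀ m : ℕ, 0 < m →
      ∑ k ∈ (gridS N).filter (fun k => (m : ℤ) < |k|), ‖fhat (ω₀ * k)‖ ^ 2 ≤
        Real.pi / (2 * m * ω₀ * T)) := by
  intro T hT f hf fhat hfhat
  have hN0 : (0:ℝ) < N := by exact_mod_cast hN
  have hT0 : 0 < T := by rw [hT]; positivity
  have h2KZ : 2 * (K:ℤ) ≤ (N:ℤ) := by exact_mod_cast h2K
  -- key sum formula
  have key : ∀ ω : ℝ, fhat ω = (((Real.sqrt N)⁻¹ * (Real.sqrt (2*T/t₀))⁻¹ : ℝ) : ℂ)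
      * ∑ k ∈ Finset.Icc (-(K:ℤ)) ((K:ℤ)-1),
          Complex.exp (-(Complex.I * (ω:ℂ) * ((t₀ * (k:ℝ) : ℝ) : ℂ))) := by
    intro ω
    rw [hfhat]
    have hfilter : (gridS N).filter (fun k : ℤ => -T ≤ t₀ * (k:ℝ) ∧ t₀ * (k:ℝ) < T)
        = Finset.Icc (-(K:ℤ)) ((K:ℤ)-1) := by
      ext k
      simp only [Finset.mem_filter, Finset.mem_Icc, gridS]
      constructor
      · rintro ⟨-, h1, h2⟩
        rw [hT, mul_comm t₀ (k:ℝ)] at h1 h2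
        have h1' : (-(K:ℝ)) ≤ (k:ℝ) :=
          (mul_le_mul_iff_of_pos_right ht₀).mp (by linarith : (-(K:ℝ)) * t₀ ≤ (k:ℝ) * t₀)
        have h2' : (k:ℝ) < (K:ℝ) := (mul_lt_mul_iff_of_pos_right ht₀).mp h2
        have h1'' : -(K:ℤ) ≤ k := by exact_mod_cast h1'
        have h2'' : k < (K:ℤ) := by exact_mod_cast h2'
        omega
      · rintro ⟨h1, h2⟩
        have h1' : (-(K:ℝ)) ≤ (k:ℝ) := by exact_mod_cast h1
        have h2' : (k:ℝ) < (K:ℝ) := by exact_mod_cast (by omega : k < (K:ℤ))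
        refine ⟨⟨by omega, by omega⟩, ?_, ?_⟩
        · rw [hT, mul_comm t₀ (k:ℝ)]; nlinarith
        · rw [hT, mul_comm t₀ (k:ℝ)]; nlinarith
    calc (((Real.sqrt N)⁻¹ : ℝ) : ℂ) *
        ∑ k ∈ gridS N, Complex.exp (-(Complex.I * (ω : ℂ) * ((t₀ * k : ℝ) : ℂ))) * f (t₀ * k)
        = (((Real.sqrt N)⁻¹ : ℝ) : ℂ) *
        ∑ k ∈ gridS N, (if -T ≤ t₀ * (k:ℝ) ∧ t₀ * (k:ℝ) < T then
          Complex.exp (-(Complex.I * (ω : ℂ) * ((t₀ * k : ℝ) : ℂ))) *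
            (((Real.sqrt (2 * T / t₀))⁻¹ : ℝ) : ℂ) else 0) := by
          congr 1
          refine Finset.sum_congr rfl (fun k _ => ?_)
          rw [hf]
          split <;> simp
      _ = (((Real.sqrt N)⁻¹ : ℝ) : ℂ) *
        ∑ k ∈ Finset.Icc (-(K:ℤ)) ((K:ℤ)-1),
          Complex.exp (-(Complex.I * (ω : ℂ) * ((t₀ * k : ℝ) : ℂ))) *
            (((Real.sqrt (2 * T / t₀))⁻¹ : ℝ) : ℂ) := by
          rw [← Finset.sum_filter, hfilter]
      _ = _ := by
          rw [← Finset.sum_mul]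
          push_cast
          ring
  have closed : ∀ k ∈ gridS N,
      Complex.exp (Complex.I * ((ω₀ * k : ℝ) : ℂ) * (t₀ : ℂ)) ≠ 1 →
      fhat (ω₀ * k) = (((Real.sqrt (2 * T * N / t₀))⁻¹ : ℝ) : ℂ) *
        (Complex.exp (-(Complex.I * ((ω₀ * k : ℝ) : ℂ) * (T : ℂ))) -
          Complex.exp (Complex.I * ((ω₀ * k : ℝ) : ℂ) * (T : ℂ))) /
        (Complex.exp (-(Complex.I * ((ω₀ * k : ℝ) : ℂ) * (t₀ : ℂ))) - 1) := by
    intro k hk hexp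
    set ω : ℝ := ω₀ * k with hω
    set z : ℂ := Complex.exp (-(Complex.I * ((ω:ℝ):ℂ) * (t₀:ℂ))) with hz
    have hz0 : z ≠ 0 := Complex.exp_ne_zero _
    have hz1 : z ≠ 1 := by
      intro h
      apply hexp
      have hmul : Complex.exp (Complex.I * ((ω:ℝ):ℂ) * (t₀:ℂ)) * z = 1 := by
        rw [hz, ← Complex.exp_add]
        have : Complex.I * ((ω:ℝ):ℂ) * (t₀:ℂ) + -(Complex.I * ((ω:ℝ):ℂ) * (t₀:ℂ)) = 0 := by
          ring
        rw [this, Complex.exp_zero]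
      rw [h, mul_one] at hmul
      exact hmul
    have hterm : ∀ j : ℤ, Complex.exp (-(Complex.I * ((ω:ℝ):ℂ) * ((t₀ * (j:ℝ) : ℝ):ℂ))) = z ^ j := by
      intro j
      rw [hz, ← Complex.exp_int_mul]
      congr 1
      push_cast
      ring
    rw [key ω, Finset.sum_congr rfl (fun j _ => hterm j), geom_Icc z hz0 hz1 K]
    have hzK : z ^ ((K:ℕ):ℤ) = Complex.exp (-(Complex.I * ((ω:ℝ):ℂ) * (T:ℂ))) := by
      rw [zpow_natCast, hz, ← Complex.exp_nat_mul, hT]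
      congr 1
      push_cast
      ring
    have hzK' : z ^ (-((K:ℕ):ℤ)) = Complex.exp (Complex.I * ((ω:ℝ):ℂ) * (T:ℂ)) := by
      rw [hz, ← Complex.exp_int_mul, hT]
      congr 1
      push_cast
      ring
    rw [hzK, hzK']
    have hsq : (Real.sqrt N)⁻¹ * (Real.sqrt (2*T/t₀))⁻¹ = (Real.sqrt (2*T*N/t₀))⁻¹ := by
      rw [← mul_inv, ← Real.sqrt_mul hN0.le]
      congr 2
      field_simp
    rw [hsq]
    ring
  refine ⟨closed, ?_⟩
  intro m hm
  set S' := (gridS N).filter (fun k => (m:ℤ) < |k|) with hS'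
  have hm1 : (1:ℤ) ≤ (m:ℤ) := by exact_mod_cast hm
  have hπ := Real.pi_pos
  have hbound : ∀ k ∈ S', ‖fhat (ω₀ * k)‖ ^ 2 ≤ t₀ * N / (8*T) * (((k:ℝ))^2)⁻¹ := by
    intro k hk
    rw [hS', Finset.mem_filter] at hk
    obtain ⟨hkg, hkm⟩ := hk
    have hkg' := hkg
    rw [gridS, Finset.mem_Icc] at hkg'
    have hchoice := abs_cases k
    have hk0 : k ≠ 0 := by rcases hchoice with ⟨h,h'⟩ | ⟨h,h'⟩ <;> rw [h] at hkm <;> omega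
    have habs : 2 * |k| ≤ (N:ℤ) := by rcases hchoice with ⟨h,h'⟩ | ⟨h,h'⟩ <;> rw [h] <;> omega
    set a : ℝ := ((|k|:ℤ):ℝ) with ha
    have haR : (0:ℝ) < a := by rw [ha]; exact_mod_cast (by omega : (0:ℤ) < |k|)
    have h2aR : 2 * a ≤ (N:ℝ) := by rw [ha]; exact_mod_cast habs
    have hφ : ω₀ * (k:ℝ) * t₀ = 2 * Real.pi * (k:ℝ) / N := by
      calc ω₀ * (k:ℝ) * t₀ = (ω₀*t₀) * (k:ℝ) := by ring
      _ = 2 * Real.pi * (k:ℝ) / N := by rw [hωt]; ring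
    have hexp : Complex.exp (Complex.I * ((ω₀ * k : ℝ) : ℂ) * (t₀:ℂ)) ≠ 1 := by
      intro hone
      rw [Complex.exp_eq_one_iff] at hone
      obtain ⟨n, hn⟩ := hone
      have him : ω₀ * (k:ℝ) * t₀ = n * (2 * Real.pi) := by
        have := congrArg Complex.im hn
        simpa using this
      rw [hφ] at him
      have hNne : (N:ℝ) ≠ 0 := ne_of_gt hN0
      have him' : 2*Real.pi*(k:ℝ) = 2*Real.pi*((n:ℝ)*N) := by
        field_simp at him
        linear_combination (2*Real.pi) * him
      have hkn : (k:ℝ) = (n:ℝ) * N := mul_left_cancel₀ (by positivity) him'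
      have hknZ : k = n * N := by exact_mod_cast hkn
      have hn0 : n ≠ 0 := by rintro rfl; simp at hknZ; omega
      have : (N:ℤ) ≤ |k| := by
        rw [hknZ, abs_mul]
        calc (N:ℤ) = 1 * (N:ℤ) := (one_mul _).symm
        _ ≤ |n| * |(N:ℤ)| := by
            have : (1:ℤ) ≤ |n| := by rcases abs_cases n with ⟨h,h'⟩|⟨h,h'⟩ <;> rw [h] <;> omega
            have : |(N:ℤ)| = (N:ℤ) := abs_of_nonneg (by positivity)
            nlinarith [abs_nonneg n]
      omega
    rw [closed k hkg hexp]
    -- norm of denominator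
    have hC : ‖Complex.exp (-(Complex.I * ((ω₀ * (k:ℝ) : ℝ):ℂ) * (t₀:ℂ))) - 1‖
        = 2 * |Real.sin (Real.pi * (k:ℝ) / N)| := by
      have harg : -(Complex.I * ((ω₀ * (k:ℝ) : ℝ):ℂ) * (t₀:ℂ))
          = ((-(ω₀ * (k:ℝ) * t₀) : ℝ) : ℂ) * Complex.I := by
        push_cast
        ring
      rw [harg, norm_exp_mul_I_sub_one, hφ]
      have h5 : -(2*Real.pi*(k:ℝ)/N)/2 = -(Real.pi*(k:ℝ)/N) := by ring
      rw [h5, Real.sin_neg, abs_neg]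
    have hsin : 2 * a / N ≤ |Real.sin (Real.pi * (k:ℝ) / N)| := by
      have habs' : |Real.sin (Real.pi * (k:ℝ) / N)| = |Real.sin (Real.pi * a / N)| := by
        rcases le_or_gt 0 k with h | h
        · rw [ha, abs_of_nonneg h]
        · rw [ha, abs_of_neg h]
          push_cast
          rw [show Real.pi * (-(k:ℝ))/N = -(Real.pi*(k:ℝ)/N) by ring, Real.sin_neg, abs_neg]
      rw [habs']
      have h1 : 0 ≤ Real.pi * a / N := by positivity
      have h2 : Real.pi * a / N ≤ Real.pi / 2 := by
        rw [div_le_div_iff₀ hN0 (by norm_num : (0:ℝ) < 2)]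
        nlinarith
      have h3 := Real.mul_le_sin h1 h2
      have h4 : 2 / Real.pi * (Real.pi * a / N) = 2 * a / N := by
        field_simp
      calc 2 * a / N = 2 / Real.pi * (Real.pi * a / N) := h4.symm
      _ ≤ Real.sin (Real.pi * a / N) := h3
      _ ≤ |Real.sin (Real.pi * a / N)| := le_abs_self _
    have hAB : ‖Complex.exp (-(Complex.I * ((ω₀ * (k:ℝ) : ℝ):ℂ) * (T:ℂ))) -
        Complex.exp (Complex.I * ((ω₀ * (k:ℝ) : ℝ):ℂ) * (T:ℂ))‖ ≤ 2 := by
      refine (norm_sub_le _ _).trans ?_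
      have e1 : ‖Complex.exp (-(Complex.I * ((ω₀ * (k:ℝ) : ℝ):ℂ) * (T:ℂ)))‖ = 1 := by
        rw [show -(Complex.I * ((ω₀ * (k:ℝ) : ℝ):ℂ) * (T:ℂ))
          = ((-(ω₀ * (k:ℝ) * T) : ℝ):ℂ) * Complex.I by push_cast; ring]
        exact Complex.norm_exp_ofReal_mul_I _
      have e2 : ‖Complex.exp (Complex.I * ((ω₀ * (k:ℝ) : ℝ):ℂ) * (T:ℂ))‖ = 1 := by
        rw [show Complex.I * ((ω₀ * (k:ℝ) : ℝ):ℂ) * (T:ℂ)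
          = ((ω₀ * (k:ℝ) * T : ℝ):ℂ) * Complex.I by push_cast; ring]
        exact Complex.norm_exp_ofReal_mul_I _
      rw [e1, e2]
      norm_num
    rw [norm_div, norm_mul, Complex.norm_real, Real.norm_eq_abs,
      abs_of_nonneg (by positivity : (0:ℝ) ≤ (Real.sqrt (2*T*N/t₀))⁻¹)]
    set c : ℝ := (Real.sqrt (2*T*N/t₀))⁻¹ with hcdef
    have hcnn : 0 ≤ c := by rw [hcdef]; positivity
    have hCge : 4 * a / N ≤ ‖Complex.exp (-(Complex.I * ((ω₀ * (k:ℝ) : ℝ):ℂ) * (t₀:ℂ))) - 1‖ := by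
      rw [hC]
      calc 4 * a / N = 2 * (2 * a / N) := by ring
      _ ≤ 2 * |Real.sin (Real.pi * (k:ℝ) / N)| := by linarith
    have hCpos : 0 < (4:ℝ) * a / N := by positivity
    have step : c * ‖Complex.exp (-(Complex.I * ((ω₀ * (k:ℝ) : ℝ):ℂ) * (T:ℂ))) -
        Complex.exp (Complex.I * ((ω₀ * (k:ℝ) : ℝ):ℂ) * (T:ℂ))‖ /
        ‖Complex.exp (-(Complex.I * ((ω₀ * (k:ℝ) : ℝ):ℂ) * (t₀:ℂ))) - 1‖
        ≤ c * 2 / (4 * a / N) := by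
      gcongr
    have hfin : (c * 2 / (4 * a / N))^2 = t₀ * N / (8*T) * (((k:ℝ))^2)⁻¹ := by
      have hc2 : c^2 = t₀ / (2*T*N) := by
        rw [hcdef, inv_pow, Real.sq_sqrt (by positivity), inv_div]
      have ha2 : a^2 = ((k:ℝ))^2 := by
        rw [ha]
        push_cast
        exact sq_abs _
      have hane : a ≠ 0 := ne_of_gt haR
      have hkne : ((k:ℝ)) ≠ 0 := by exact_mod_cast hk0
      have expand : (c * 2 / (4 * a / N))^2 = c^2 * (N:ℝ)^2 / (4 * a^2) := by
        field_simp
        ring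
      rw [expand, hc2, ha2]
      field_simp
      ring
    calc (c * ‖Complex.exp (-(Complex.I * ((ω₀ * (k:ℝ) : ℝ):ℂ) * (T:ℂ))) -
        Complex.exp (Complex.I * ((ω₀ * (k:ℝ) : ℝ):ℂ) * (T:ℂ))‖ /
        ‖Complex.exp (-(Complex.I * ((ω₀ * (k:ℝ) : ℝ):ℂ) * (t₀:ℂ))) - 1‖)^2
        ≤ (c * 2 / (4 * a / N))^2 := by
          apply pow_le_pow_left₀ (by positivity) step
      _ = t₀ * N / (8*T) * (((k:ℝ))^2)⁻¹ := hfin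
  have hsum : ∑ k ∈ S', (((k:ℝ))^2)⁻¹ ≤ 2 * (m:ℝ)⁻¹ := by
    have hmaps : ∀ k ∈ S', k.natAbs ∈ Finset.Ioc m N := by
      intro k hk
      rw [hS', Finset.mem_filter, gridS, Finset.mem_Icc] at hk
      obtain ⟨⟨h1, h2⟩, h3⟩ := hk
      rw [Finset.mem_Ioc]
      rcases abs_cases k with ⟨h, h'⟩ | ⟨h, h'⟩ <;> rw [h] at h3 <;> omega
    have hfibers := Finset.sum_fiberwise_of_maps_to hmaps (fun k => (((k:ℝ))^2)⁻¹)
    rw [← hfibers]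
    have hfib : ∀ j ∈ Finset.Ioc m N, ∑ k ∈ S'.filter (fun k => k.natAbs = j), (((k:ℝ))^2)⁻¹
        ≤ 2 * (((j:ℝ))^2)⁻¹ := by
      intro j hj
      rw [Finset.mem_Ioc] at hj
      have hj0 : j ≠ 0 := by omega
      have hsub : S'.filter (fun k => k.natAbs = j) ⊆ {(j:ℤ), -(j:ℤ)} := by
        intro x hx
        rw [Finset.mem_filter] at hx
        simp only [Finset.mem_insert, Finset.mem_singleton]
        omega
      calc ∑ k ∈ S'.filter (fun k => k.natAbs = j), (((k:ℝ))^2)⁻¹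
          ≤ ∑ k ∈ ({(j:ℤ), -(j:ℤ)} : Finset ℤ), (((k:ℝ))^2)⁻¹ :=
            Finset.sum_le_sum_of_subset_of_nonneg hsub (by intros; positivity)
        _ = 2 * (((j:ℝ))^2)⁻¹ := by
            rw [Finset.sum_pair (by omega : (j:ℤ) ≠ -(j:ℤ))]
            push_cast
            rw [neg_sq]
            ring
    calc ∑ j ∈ Finset.Ioc m N, ∑ k ∈ S'.filter (fun k => k.natAbs = j), (((k:ℝ))^2)⁻¹
        ≤ ∑ j ∈ Finset.Ioc m N, 2 * (((j:ℝ))^2)⁻¹ := Finset.sum_le_sum hfib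
      _ = 2 * ∑ j ∈ Finset.Ioc m N, (((j:ℝ))^2)⁻¹ := by rw [Finset.mul_sum]
      _ ≤ 2 * (m:ℝ)⁻¹ := by
          have hIoc : ∑ j ∈ Finset.Ioc m N, (((j:ℝ))^2)⁻¹ ≤ (m:ℝ)⁻¹ := by
            rcases le_or_gt m N with h | h
            · refine (sum_Ioc_inv_sq_le_sub hm.ne' h).trans ?_
              have : (0:ℝ) ≤ ((N:ℝ))⁻¹ := by positivity
              linarith
            · rw [Finset.Ioc_eq_empty (by omega)]
              simp only [Finset.sum_empty]
              positivity
          linarith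
  have hm0 : (0:ℝ) < m := by exact_mod_cast hm
  calc ∑ k ∈ S', ‖fhat (ω₀ * k)‖^2 ≤ ∑ k ∈ S', t₀ * N / (8*T) * (((k:ℝ))^2)⁻¹ :=
        Finset.sum_le_sum hbound
    _ = t₀ * N / (8*T) * ∑ k ∈ S', (((k:ℝ))^2)⁻¹ := by rw [Finset.mul_sum]
    _ ≤ t₀ * N / (8*T) * (2 * (m:ℝ)⁻¹) :=
        mul_le_mul_of_nonneg_left hsum (by positivity)
    _ = Real.pi / (2 * m * ω₀ * T) := by
        have h2π : ω₀ * t₀ * N = 2 * Real.pi := by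
          rw [hωt]
          field_simp
        field_simp
        linear_combination 4 * h2π

end Stmt12
end
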